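/- Let 𝒜 be a real Hilbert space. Then the map sending β ∈ 𝒜 to the character χ_β : 𝒜 → ℂ, χ_β(α) = exp(i⟨β,α⟩), is a bijection from 𝒜 onto the set of all continuous characters of 𝒜, i.e. all continuous functions χ : 𝒜 → ℂ with |χ(α)| = 1 for all α and χ(α₁+α₂) = χ(α₁)χ(α₂) for all α₁, α₂ ∈ 𝒜; moreover this bijection is a group isomorphism from the additive group of 𝒜 onto the character group under pointwise multiplication. -/

import Mathlib

noncomputable section

open Complex intervalIntegral

/-- If `exp (a t i) = 1` for all real `t`, then `a = 0`. -/
lemma exp_mul_I_eq_one_forall {a : ℝ} (h : ∀ t : ℝ, Complex.exp (((a * t : ℝ) : ℂ) * Complex.I) = 1) :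
    a = 0 := by
  by_contra ha
  have := h (Real.pi / a)
  rw [show (a * (Real.pi / a) : ℝ) = Real.pi by field_simp] at this
  rw [Complex.exp_pi_mul_I] at this
  norm_num at this

lemma exp_mul_I_inj {c c' : ℝ}
    (h : ∀ t : ℝ, Complex.exp ((c : ℂ) * t * Complex.I) = Complex.exp ((c' : ℂ) * t * Complex.I)) :
    c = c' := by
  have key : ∀ t : ℝ, Complex.exp ((((c - c') * t : ℝ) : ℂ) * Complex.I) = 1 := by
    intro t
    have h1 := h t
    have h2 : Complex.exp ((c : ℂ) * t * Complex.I) * Complex.exp (-((c' : ℂ) * t * Complex.I)) = 1 := by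
      rw [h1, ← Complex.exp_add]; simp
    rw [← Complex.exp_add] at h2
    rw [← h2]; congr 1; push_cast; ring
  have := exp_mul_I_eq_one_forall key
  linarith

/-- Classification of continuous characters of `ℝ`. -/
lemma real_char (φ : ℝ → ℂ) (hc : Continuous φ) (habs : ∀ t, ‖φ t‖ = 1)
    (hadd : ∀ s t, φ (s + t) = φ s * φ t) :
    ∃ c : ℝ, ∀ t : ℝ, φ t = Complex.exp ((c : ℂ) * t * Complex.I) := by
  have hne : ∀ t, φ t ≠ 0 := fun t h0 => by
    have := habs t; rw [h0] at this; simp at this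
  have hφ0 : φ 0 = 1 := by
    have h := hadd 0 0
    rw [add_zero] at h
    have h' : φ 0 * φ 0 = φ 0 * 1 := by rw [mul_one, ← h]
    exact mul_left_cancel₀ (hne 0) h'
  -- the antiderivative
  set G : ℝ → ℂ := fun a => ∫ t in (0:ℝ)..a, φ t with hGdef
  have hG : ∀ b : ℝ, HasDerivAt G (φ b) b := fun b => (hc.integral_hasStrictDerivAt 0 b).hasDerivAt
  -- find a with G a ≠ 0
  have hex : ∃ a : ℝ, G a ≠ 0 := by
    by_contra h
    push_neg at h
    have hGz : G = fun _ => 0 := funext h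
    have h1 : HasDerivAt (fun _ : ℝ => (0 : ℂ)) (φ 0) 0 := hGz ▸ hG 0
    have h2 : φ 0 = 0 := h1.unique (hasDerivAt_const 0 0)
    exact hne 0 h2
  obtain ⟨a, ha⟩ := hex
  -- key identity: φ x * G a = G (x + a) - G x
  have key : ∀ x : ℝ, φ x * G a = G (x + a) - G x := by
    intro x
    have h1 : (∫ t in (0:ℝ)..a, φ (x + t)) = ∫ t in x..(x + a), φ t := by
      simpa using intervalIntegral.integral_comp_add_left φ x (a := 0) (b := a)
    have h2 : (∫ t in (0:ℝ)..a, φ (x + t)) = φ x * G a := by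
      simp_rw [hadd x]
      rw [intervalIntegral.integral_const_mul]
    have h3 : G x + ∫ t in x..(x + a), φ t = G (x + a) := by
      exact intervalIntegral.integral_add_adjacent_intervals
        (hc.intervalIntegrable _ _) (hc.intervalIntegrable _ _)
    rw [← h2, h1]
    linear_combination h3
  -- φ is differentiable at 0
  have hφeq : φ = fun x => (G (x + a) - G x) * (G a)⁻¹ := by
    funext x
    rw [← key x, mul_assoc, mul_inv_cancel₀ ha, mul_one]
  have hGa : HasDerivAt (fun x : ℝ => G (x + a)) (φ (0 + a)) 0 :=
    HasDerivAt.comp_add_const 0 a (hG (0 + a))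
  set d : ℂ := (φ (0 + a) - φ 0) * (G a)⁻¹ with hddef
  have hd0 : HasDerivAt φ d 0 := by
    have h2 : HasDerivAt (fun x => (G (x + a) - G x) * (G a)⁻¹) d 0 :=
      (hGa.sub (hG 0)).mul_const _
    have heq : φ =ᶠ[nhds (0:ℝ)] fun x => (G (x + a) - G x) * (G a)⁻¹ :=
      Filter.Eventually.of_forall fun x =>
        show φ x = (G (x + a) - G x) * (G a)⁻¹ by
          rw [← key x, mul_assoc, mul_inv_cancel₀ ha, mul_one]
    exact (Filter.EventuallyEq.hasDerivAt_iff heq).mpr h2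
  -- φ has derivative d * φ x everywhere
  have hder : ∀ x : ℝ, HasDerivAt φ (φ x * d) x := by
    intro x
    have h1 : HasDerivAt (fun y : ℝ => φ (y + -x)) d x :=
      HasDerivAt.comp_add_const x (-x) (by simpa using hd0)
    have h2 : HasDerivAt (fun y : ℝ => φ x * φ (y + -x)) (φ x * d) x := h1.const_mul (φ x)
    have heq : φ =ᶠ[nhds x] fun y => φ x * φ (y + -x) :=
      Filter.Eventually.of_forall fun y => by
        have := hadd x (y + -x)
        rw [show x + (y + -x) = y by ring] at this
        exact this
    exact (Filter.EventuallyEq.hasDerivAt_iff heq).mpr h2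
  -- conclude φ t = exp (d t)
  have hsol : ∀ t : ℝ, φ t = Complex.exp (d * t) := by
    have hexp : ∀ t : ℝ, HasDerivAt (fun t : ℝ => Complex.exp (-(d * t))) (Complex.exp (-(d * t)) * (-d)) t := by
      intro t
      have h1 : HasDerivAt (fun t : ℝ => -(d * (t : ℂ))) (-d) t := by
        have h2 : HasDerivAt (fun t : ℝ => (t : ℂ)) 1 t := (hasDerivAt_id t).ofReal_comp
        exact ((h2.const_mul d).neg).congr_deriv (by simp)
      simpa using h1.cexp
    set g : ℝ → ℂ := fun t => φ t * Complex.exp (-(d * t)) with hgdef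
    have hg : ∀ t : ℝ, HasDerivAt g 0 t := by
      intro t
      have := (hder t).mul (hexp t)
      exact this.congr_deriv (by ring)
    have hgc : ∀ t : ℝ, g t = g 0 := by
      intro t
      exact is_const_of_deriv_eq_zero (fun x => (hg x).differentiableAt) (fun x => (hg x).deriv) t 0
    intro t
    have h1 := hgc t
    simp only [hgdef, Complex.ofReal_zero, mul_zero, neg_zero, Complex.exp_zero, mul_one, hφ0] at h1
    have h2 : φ t * Complex.exp (-(d * t)) * Complex.exp (d * t) = Complex.exp (d * t) := by
      rw [h1, one_mul]
    rwa [mul_assoc, ← Complex.exp_add, neg_add_cancel, Complex.exp_zero, mul_one] at h2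
  -- d is purely imaginary
  have hre : d.re = 0 := by
    have h1 : ∀ t : ℝ, Real.exp ((d * t).re) = 1 := by
      intro t
      have := habs t
      rw [hsol t, Complex.norm_exp] at this
      exact this
    have h2 := h1 1
    simp only [Complex.ofReal_one, mul_one] at h2
    have h3 : (d : ℂ).re = Real.log (Real.exp d.re) := (Real.log_exp _).symm
    rw [h2, Real.log_one] at h3
    exact h3
  refine ⟨d.im, fun t => ?_⟩
  rw [hsol t]
  congr 1
  have : d = (d.im : ℂ) * Complex.I := by
    apply Complex.ext <;> simp [hre]
  conv_lhs => rw [this]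
  ring

theorem characters_of_real_hilbert_space
    (A : Type*) [NormedAddCommGroup A] [InnerProductSpace ℝ A] [CompleteSpace A] :
    Set.BijOn
      (fun (β : A) => fun (α : A) => Complex.exp (((inner ℝ β α : ℝ) : ℂ) * Complex.I))
      Set.univ
      {χ : A → ℂ | Continuous χ ∧ (∀ α, ‖χ α‖ = 1) ∧
        ∀ α₁ α₂, χ (α₁ + α₂) = χ α₁ * χ α₂} ∧
    ∀ β₁ β₂ α : A,
      Complex.exp (((inner ℝ (β₁ + β₂) α : ℝ) : ℂ) * Complex.I) =
        Complex.exp (((inner ℝ β₁ α : ℝ) : ℂ) * Complex.I) *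
          Complex.exp (((inner ℝ β₂ α : ℝ) : ℂ) * Complex.I) := by
  constructor
  · refine ⟨?_, ?_, ?_⟩
    · -- MapsTo
      intro β _
      refine ⟨?_, ?_, ?_⟩
      · exact Complex.continuous_exp.comp
          ((Complex.continuous_ofReal.comp (continuous_const.inner continuous_id)).mul continuous_const)
      · intro α
        rw [Complex.norm_exp]
        simp
      · intro α₁ α₂
        show Complex.exp (((inner ℝ β (α₁ + α₂) : ℝ) : ℂ) * Complex.I) =
          Complex.exp (((inner ℝ β α₁ : ℝ) : ℂ) * Complex.I) *
            Complex.exp (((inner ℝ β α₂ : ℝ) : ℂ) * Complex.I)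
        rw [← Complex.exp_add, inner_add_right]
        congr 1
        push_cast
        ring
    · -- InjOn
      intro β₁ _ β₂ _ h
      have hd : ∀ α : A, Complex.exp (((inner ℝ β₁ α : ℝ) : ℂ) * Complex.I)
          = Complex.exp (((inner ℝ β₂ α : ℝ) : ℂ) * Complex.I) := fun α => congrFun h α
      set δ := β₁ - β₂ with hδ
      have hkey : ∀ t : ℝ, Complex.exp ((((inner ℝ δ δ : ℝ) * t : ℝ) : ℂ) * Complex.I) = 1 := by
        intro t
        have h1 := hd (t • δ)
        have h2 : (inner ℝ β₁ (t • δ) : ℝ) - (inner ℝ β₂ (t • δ) : ℝ) = (inner ℝ δ δ : ℝ) * t := by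
          rw [real_inner_smul_right, real_inner_smul_right, ← mul_sub, ← inner_sub_left]
          ring
        have h3 : Complex.exp ((((inner ℝ β₁ (t • δ) : ℝ) : ℂ)) * Complex.I)
            * Complex.exp (-(((inner ℝ β₂ (t • δ) : ℝ) : ℂ)) * Complex.I) = 1 := by
          rw [h1, ← Complex.exp_add]
          ring_nf
          simp
        rw [← Complex.exp_add] at h3
        rw [← h3]
        congr 1
        push_cast [← h2]
        ring
      have h0 : (inner ℝ δ δ : ℝ) = 0 := exp_mul_I_eq_one_forall hkey
      have : δ = 0 := by
        rwa [inner_self_eq_zero] at h0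
      rw [hδ, sub_eq_zero] at this
      exact this
    · -- SurjOn
      rintro χ ⟨hχc, hχabs, hχadd⟩
      -- for each α, classify t ↦ χ (t • α)
      have hex : ∀ α : A, ∃ c : ℝ, ∀ t : ℝ, χ (t • α) = Complex.exp ((c : ℂ) * t * Complex.I) := by
        intro α
        apply real_char (fun t => χ (t • α))
        · exact hχc.comp (continuous_id.smul continuous_const)
        · intro t; exact hχabs _
        · intro s t
          rw [add_smul]
          exact hχadd _ _
      choose f hf using hex
      -- f is additive
      have hfadd : ∀ α₁ α₂ : A, f (α₁ + α₂) = f α₁ + f α₂ := by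
        intro α₁ α₂
        apply exp_mul_I_inj
        intro t
        rw [← hf (α₁ + α₂) t, smul_add, hχadd, hf α₁ t, hf α₂ t, ← Complex.exp_add]
        congr 1
        push_cast
        ring
      set F : A →+ ℝ := AddMonoidHom.mk' f hfadd with hFdef
      -- χ 0 = 1
      have hχne : ∀ α, χ α ≠ 0 := fun α h0 => by
        have := hχabs α; rw [h0] at this; simp at this
      have hχ0 : χ 0 = 1 := by
        have h := hχadd 0 0
        rw [add_zero] at h
        have h' : χ 0 * χ 0 = χ 0 * 1 := by rw [mul_one, ← h]
        exact mul_left_cancel₀ (hχne 0) h'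
      -- near 0, the real part of χ is positive
      have hev : ∀ᶠ α in nhds (0 : A), 0 < (χ α).re := by
        have hcont : Filter.Tendsto (fun α => (χ α).re) (nhds 0) (nhds 1) := by
          have := (Complex.continuous_re.comp hχc).continuousAt (x := (0 : A))
          rwa [ContinuousAt, Function.comp_apply, hχ0, Complex.one_re] at this
        exact hcont.eventually (eventually_gt_nhds one_pos)
      obtain ⟨ε, hε, hball⟩ := Metric.eventually_nhds_iff_ball.mp hev
      -- bound: ‖α‖ < ε → |f α| ≤ π / 2
      have hbound : ∀ α : A, ‖α‖ < ε → |f α| ≤ Real.pi / 2 := by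
        intro α hα
        by_contra hgt
        push_neg at hgt
        have hfne : f α ≠ 0 := by
          intro h0; rw [h0] at hgt; simp at hgt
          linarith [Real.pi_pos]
        set t : ℝ := (Real.pi / 2) / |f α| with htdef
        have ht0 : 0 < t := div_pos (by linarith [Real.pi_pos]) (abs_pos.mpr hfne)
        have ht1 : t < 1 := by
          rw [htdef, div_lt_one (abs_pos.mpr hfne)]
          exact hgt
        have hmem : t • α ∈ Metric.ball (0 : A) ε := by
          rw [Metric.mem_ball, dist_zero_right, norm_smul, Real.norm_eq_abs, abs_of_pos ht0]
          have h4 : t * ‖α‖ ≤ 1 * ‖α‖ := mul_le_mul_of_nonneg_right ht1.le (norm_nonneg _)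
          rw [one_mul] at h4
          exact lt_of_le_of_lt h4 hα
        have hpos := hball _ hmem
        have hval : χ (t • α) = Complex.exp (((f α * t : ℝ) : ℂ) * Complex.I) := by
          rw [hf α t]; push_cast; ring_nf
        rw [hval, Complex.exp_ofReal_mul_I_re] at hpos
        have habs : |f α * t| = Real.pi / 2 := by
          rw [abs_mul, abs_of_pos ht0, htdef]
          field_simp
        rw [← Real.cos_abs, habs, Real.cos_pi_div_two] at hpos
        exact lt_irrefl 0 hpos
      -- continuity of f at 0
      have hcont0 : Filter.Tendsto f (nhds 0) (nhds 0) := by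
        rw [Metric.tendsto_nhds]
        intro δ hδ
        obtain ⟨n, hn⟩ := exists_nat_gt (Real.pi / 2 / δ)
        have hn0 : 0 < (n : ℝ) := lt_of_le_of_lt (div_nonneg (by positivity) (le_of_lt hδ)) hn
        rw [Metric.eventually_nhds_iff_ball]
        refine ⟨ε / n, div_pos hε hn0, ?_⟩
        intro α hα
        rw [Metric.mem_ball, dist_zero_right] at hα
        have hnsmul : f ((n : ℕ) • α) = (n : ℝ) * f α := by
          have h := map_nsmul F n α
          simpa [hFdef, nsmul_eq_mul] using h
        have hnorm : ‖(n : ℕ) • α‖ < ε := by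
          have hsm : (n : ℕ) • α = (n : ℝ) • α := (Nat.cast_smul_eq_nsmul ℝ n α).symm
          rw [hsm, norm_smul, Real.norm_eq_abs, Nat.abs_cast]
          calc (n : ℝ) * ‖α‖ < (n : ℝ) * (ε / n) := mul_lt_mul_of_pos_left hα hn0
            _ = ε := by field_simp
        have := hbound _ hnorm
        rw [hnsmul, abs_mul, Nat.abs_cast] at this
        rw [dist_zero_right, Real.norm_eq_abs]
        have h2 : (n : ℝ) * |f α| ≤ Real.pi / 2 := this
        have h3 : Real.pi / 2 < (n : ℝ) * δ := by
          rw [div_lt_iff₀ hδ] at hn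
          linarith
        have h4 : (n : ℝ) * |f α| < (n : ℝ) * δ := lt_of_le_of_lt h2 h3
        exact (mul_lt_mul_iff_right₀ hn0).mp h4
      -- f is continuous
      have hFcont : Continuous F := by
        apply continuous_of_continuousAt_zero F
        rw [ContinuousAt, map_zero]
        exact hcont0
      -- Riesz representation
      set L : A →L[ℝ] ℝ := F.toRealLinearMap hFcont with hLdef
      set β : A := (InnerProductSpace.toDual ℝ A).symm L with hβdef
      refine ⟨β, Set.mem_univ _, ?_⟩
      funext α
      show Complex.exp (((inner ℝ β α : ℝ) : ℂ) * Complex.I) = χ α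
      have h1 : (inner ℝ β α : ℝ) = L α := InnerProductSpace.toDual_symm_apply
      have h2 : L α = f α := rfl
      have h3 := hf α 1
      rw [one_smul] at h3
      rw [h1, h2, h3]
      push_cast
      ring_nf
  · intro β₁ β₂ α
    rw [← Complex.exp_add, inner_add_left]
    congr 1
    push_cast
    ring
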